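/- If a circular-arc graph G has an intersection model F in which at least four arcs have density at most 2, then G has no locally connected spanning tree. -/

import Mathlib

/-- `T` is a locally connected spanning tree of `G`. -/
def IsLCST {V : Type*} (G T : SimpleGraph V) : Prop :=
  T ≤ G ∧ T.Connected ∧ T.IsAcyclic ∧
    ∀ v : V, (G.induce (T.neighborSet v)).Connected

/-- The circle is modeled by the `m` cyclically ordered points of `Fin m`.
An arc `a = (h, t)` runs counterclockwise from its head `h` to its tail `t`;
it contains the point `x` iff `x` is encountered no later than `t` when
traversing counterclockwise from `h` (measured by cyclic subtraction). -/
def arcContains {m : ℕ} (a : Fin m × Fin m) (x : Fin m) : Prop :=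
  x - a.1 ≤ a.2 - a.1

namespace CircAux

variable {m : ℕ}

lemma valsub (a b : Fin m) :
    (a - b).val = if b.val ≤ a.val then a.val - b.val else a.val + m - b.val := by
  have ha := a.is_lt
  have hb := b.is_lt
  rw [Fin.sub_def]
  dsimp only
  rcases le_or_gt b.val a.val with h | h
  · rw [if_pos h]
    have e : m - b.val + a.val = (a.val - b.val) + m := by omega
    rw [e, Nat.add_mod_right]
    exact Nat.mod_eq_of_lt (by omega)
  · rw [if_neg (by omega)]
    have e : m - b.val + a.val = a.val + m - b.val := by omega
    rw [e]
    exact Nat.mod_eq_of_lt (by omega)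

/-- `p` lies in the clopen cyclic interval `[c, d)`. -/
def inCO (c d p : Fin m) : Prop := (p - c).val < (d - c).val

lemma fin_ne_val {a b : Fin m} (h : a ≠ b) : a.val ≠ b.val := by
  intro hv; exact h (Fin.ext hv)

lemma K5 (a : Fin m × Fin m) : arcContains a a.1 := by
  have h1 := a.1.is_lt
  have h2 := a.2.is_lt
  simp only [arcContains, Fin.le_def, valsub]
  split_ifs <;> omega

lemma K6 (x : Fin m) : (x - x).val = 0 := by simp [valsub]

lemma K7 {x y : Fin m} (h : x ≠ y) : 0 < (x - y).val := by
  have := fin_ne_val h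
  have h1 := x.is_lt
  have h2 := y.is_lt
  rw [valsub]
  split_ifs <;> omega

lemma K0 {c d : Fin m} (h : c ≠ d) : inCO c d c := by
  have := fin_ne_val h
  have h1 := c.is_lt
  have h2 := d.is_lt
  simp only [inCO, valsub]
  split_ifs <;> omega

lemma K1 {c d : Fin m} (h : c ≠ d) (p : Fin m) : inCO c d p ∨ inCO d c p := by
  have := fin_ne_val h
  have h1 := c.is_lt
  have h2 := d.is_lt
  have h3 := p.is_lt
  simp only [inCO, valsub]
  split_ifs <;> omega

lemma K2 {c d p : Fin m} (h1 : inCO c d p) (h2 : inCO d c p) : False := by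
  have hc := c.is_lt
  have hd := d.is_lt
  have hp := p.is_lt
  simp only [inCO, valsub] at h1 h2
  split_ifs at h1 h2 <;> omega

lemma K4 {a : Fin m × Fin m} {z : Fin m} (hz : arcContains a z) (y : Fin m)
    (hy : (y - a.1).val ≤ (z - a.1).val) : arcContains a y := by
  simp only [arcContains, Fin.le_def] at *
  omega

lemma zmain {a : Fin m × Fin m} {c d : Fin m} (hanch : inCO c d a.1)
    (hmiss : ¬ arcContains a d) {p : Fin m} (hp : arcContains a p) : inCO c d p := by
  have h1 := a.1.is_lt
  have h2 := a.2.is_lt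
  have h3 := c.is_lt
  have h4 := d.is_lt
  have h5 := p.is_lt
  simp only [inCO, arcContains, Fin.le_def, valsub] at *
  split_ifs at * <;> omega

lemma valsub_base [NeZero m] (x y b : Fin m) :
    (x - y).val = if (y - b).val ≤ (x - b).val then (x - b).val - (y - b).val
      else (x - b).val + m - (y - b).val := by
  rw [← sub_sub_sub_cancel_right x y b, valsub]

lemma no_cross_tree {V : Type*} {T : SimpleGraph V} (hc : T.Connected) {W : Set V}
    (h1 : W.Nonempty) (h2 : ∃ v, v ∉ W)
    (h3 : ∀ u v, u ∈ W → v ∉ W → ¬ T.Adj u v) : False := by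
  obtain ⟨u, hu⟩ := h1
  obtain ⟨v, hv⟩ := h2
  obtain ⟨p⟩ := hc.preconnected u v
  obtain ⟨d, _, hd1, hd2⟩ := p.exists_boundary_dart W hu hv
  exact h3 _ _ hd1 hd2 d.adj

lemma nbhd_one_side {V : Type*} {G : SimpleGraph V} {s : Set V}
    (hconn : (G.induce s).Connected) {X Y : Set V}
    (hXY : ∀ x ∈ X, ∀ y ∈ Y, ¬ G.Adj x y) (hsub : s ⊆ X ∪ Y) :
    s ⊆ X ∨ s ⊆ Y := by
  by_contra hcon
  obtain ⟨u, hu, huX⟩ := Set.not_subset.mp (fun hs => hcon (Or.inl hs))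
  obtain ⟨v, hv, hvY⟩ := Set.not_subset.mp (fun hs => hcon (Or.inr hs))
  have hv' : v ∈ X := (hsub hv).resolve_right hvY
  obtain ⟨p⟩ := hconn.preconnected ⟨v, hv⟩ ⟨u, hu⟩
  obtain ⟨d, _, hd1, hd2⟩ := p.exists_boundary_dart {z : s | (z : V) ∈ X} hv' huX
  have hadj : G.Adj (d.fst : V) (d.snd : V) := d.adj
  have hsY : (d.snd : V) ∈ Y := (hsub d.snd.2).resolve_left hd2
  exact hXY _ hd1 _ hsY hadj

lemma lcst_no_split {V : Type*} {G T : SimpleGraph V} (hT : IsLCST G T)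
    (a b : V) (hab : ¬ G.Adj a b) (X Y : Set V)
    (hXa : a ∉ X) (hXb : b ∉ X) (hYa : a ∉ Y) (hYb : b ∉ Y)
    (hXY : ∀ x ∈ X, ∀ y ∈ Y, ¬ G.Adj x y)
    (hdisj : ∀ x, x ∈ X → x ∈ Y → False)
    (hcov : ∀ v, v = a ∨ v = b ∨ v ∈ X ∨ v ∈ Y)
    (hXne : X.Nonempty) (hYne : Y.Nonempty) : False := by
  obtain ⟨hle, hconn, -, hloc⟩ := hT
  have hYX : ∀ x ∈ Y, ∀ y ∈ X, ¬ G.Adj x y := fun x hx y hy hadj => hXY y hy x hx hadj.symm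
  have hNa : T.neighborSet a ⊆ X ∪ Y := by
    intro z hz
    have hadj : G.Adj a z := hle hz
    rcases hcov z with h | h | h | h
    · exact absurd (h ▸ hadj) (G.irrefl)
    · exact absurd (h ▸ hadj) hab
    · exact Or.inl h
    · exact Or.inr h
  have hNb : T.neighborSet b ⊆ X ∪ Y := by
    intro z hz
    have hadj : G.Adj b z := hle hz
    rcases hcov z with h | h | h | h
    · exact absurd (h ▸ hadj) (fun hh => hab hh.symm)
    · exact absurd (h ▸ hadj) (G.irrefl)
    · exact Or.inl h
    · exact Or.inr h
  have hQa := nbhd_one_side (hloc a) hXY hNa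
  have hQb := nbhd_one_side (hloc b) hXY hNb
  obtain ⟨x0, hx0⟩ := hXne
  obtain ⟨y0, hy0⟩ := hYne
  have main : ∀ W : Set V, W.Nonempty → (∃ v, v ∉ W) →
      (∀ u v, u ∈ W → v ∉ W → ¬ T.Adj u v) → False :=
    fun W h1 h2 h3 => no_cross_tree hconn h1 h2 h3
  rcases hQa with hA | hA <;> rcases hQb with hB | hB
  · refine main Y ⟨y0, hy0⟩ ⟨a, hYa⟩ ?_
    intro u v hu hv hadj
    rcases hcov v with h | h | h | h
    · subst h; exact hdisj u (hA hadj.symm) hu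
    · subst h; exact hdisj u (hB hadj.symm) hu
    · exact hYX u hu v h (hle hadj)
    · exact hv h
  · refine main (Y ∪ {b}) ⟨y0, Or.inl hy0⟩ ⟨x0, ?_⟩ ?_
    · rintro (h | h)
      · exact hdisj x0 hx0 h
      · exact hXb (h ▸ hx0)
    · rintro u v (hu | hu) hv hadj
      · rcases hcov v with h | h | h | h
        · subst h; exact hdisj u (hA hadj.symm) hu
        · exact hv (Or.inr h)
        · exact hYX u hu v h (hle hadj)
        · exact hv (Or.inl h)
      · have : u = b := hu
        subst this
        exact hv (Or.inl (hB hadj))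
  · refine main (Y ∪ {a}) ⟨y0, Or.inl hy0⟩ ⟨x0, ?_⟩ ?_
    · rintro (h | h)
      · exact hdisj x0 hx0 h
      · exact hXa (h ▸ hx0)
    · rintro u v (hu | hu) hv hadj
      · rcases hcov v with h | h | h | h
        · exact hv (Or.inr h)
        · subst h; exact hdisj u (hB hadj.symm) hu
        · exact hYX u hu v h (hle hadj)
        · exact hv (Or.inl h)
      · have : u = a := hu
        subst this
        exact hv (Or.inl (hA hadj))
  · refine main X ⟨x0, hx0⟩ ⟨a, hXa⟩ ?_
    intro u v hu hv hadj
    rcases hcov v with h | h | h | h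
    · subst h; exact hdisj u hu (hA hadj.symm)
    · subst h; exact hdisj u hu (hB hadj.symm)
    · exact hv h
    · exact hXY u hu v h (hle hadj)

lemma not_three {V : Type*} [Fintype V] {S : Set V} (h : S.ncard ≤ 2) {a b c : V}
    (ha : a ∈ S) (hb : b ∈ S) (hc : c ∈ S)
    (hab : a ≠ b) (hac : a ≠ c) (hbc : b ≠ c) : False := by
  have hsub : ({a, b, c} : Set V) ⊆ S := by
    intro x hx
    rcases hx with h1 | h1 | h1 <;> subst h1 <;> assumption
  have h3 : ({a, b, c} : Set V).ncard = 3 := by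
    rw [Set.ncard_insert_of_notMem (by simp [hab, hac]) (Set.toFinite _),
      Set.ncard_pair hbc]
  have := Set.ncard_le_ncard hsub (Set.toFinite S)
  omega

lemma exists4 {V : Type*} [Fintype V] {S : Set V} (h : 4 ≤ S.ncard) :
    ∃ a b c d, a ∈ S ∧ b ∈ S ∧ c ∈ S ∧ d ∈ S ∧
      a ≠ b ∧ a ≠ c ∧ a ≠ d ∧ b ≠ c ∧ b ≠ d ∧ c ≠ d := by
  obtain ⟨a, ha⟩ := (Set.ncard_pos (Set.toFinite S)).mp (by omega)
  have h1 : 3 ≤ (S \ {a}).ncard := by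
    rw [Set.ncard_diff_singleton_of_mem ha]; omega
  obtain ⟨b, hb⟩ := (Set.ncard_pos (s := S \ {a}) (Set.toFinite _)).mp (by omega)
  have h2 : 2 ≤ ((S \ {a}) \ {b}).ncard := by
    rw [Set.ncard_diff_singleton_of_mem hb]; omega
  obtain ⟨c, hc⟩ := (Set.ncard_pos (s := (S \ {a}) \ {b}) (Set.toFinite _)).mp (by omega)
  have h3 : 1 ≤ (((S \ {a}) \ {b}) \ {c}).ncard := by
    rw [Set.ncard_diff_singleton_of_mem hc]; omega
  obtain ⟨d, hd⟩ := (Set.ncard_pos (s := ((S \ {a}) \ {b}) \ {c}) (Set.toFinite _)).mp (by omega)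
  obtain ⟨⟨⟨hdS, hdc'⟩, hdb'⟩, hda'⟩ := hd
  obtain ⟨⟨hcS, hcb'⟩, hca'⟩ := hc
  obtain ⟨hbS, hba'⟩ := hb
  refine ⟨a, b, c, d, ha, hbS, hcS, hdS, ?_, ?_, ?_, ?_, ?_, ?_⟩ <;>
    simp_all [Set.mem_singleton_iff] <;> tauto

lemma sort3 {V : Type*} (key : V → ℕ) (x y z : V) (hxy : key x ≠ key y)
    (hxz : key x ≠ key z) (hyz : key y ≠ key z) :
    ∃ p q r, key p < key q ∧ key q < key r ∧
      (p = x ∨ p = y ∨ p = z) ∧ (q = x ∨ q = y ∨ q = z) ∧ (r = x ∨ r = y ∨ r = z) := by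
  rcases lt_or_gt_of_ne hxy with h1 | h1 <;>
    rcases lt_or_gt_of_ne hxz with h2 | h2 <;>
    rcases lt_or_gt_of_ne hyz with h3 | h3
  · exact ⟨x, y, z, h1, h3, by tauto, by tauto, by tauto⟩
  · exact ⟨x, z, y, h2, h3, by tauto, by tauto, by tauto⟩
  · omega
  · exact ⟨z, x, y, h2, h1, by tauto, by tauto, by tauto⟩
  · exact ⟨y, x, z, h1, h2, by tauto, by tauto, by tauto⟩
  · omega
  · exact ⟨y, z, x, h3, h2, by tauto, by tauto, by tauto⟩
  · exact ⟨z, y, x, h3, h1, by tauto, by tauto, by tauto⟩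

section Main

variable {V : Type*} [Fintype V] {G T : SimpleGraph V} {F : V → Fin m × Fin m}

lemma caseA_contra
    (hG : ∀ u v : V, G.Adj u v ↔ u ≠ v ∧ ∃ x, arcContains (F u) x ∧ arcContains (F v) x)
    (hT : IsLCST G T)
    {s wx wy : V} {Px Py : Fin m}
    (ex : (F wx).1 = Px) (ey : (F wy).1 = Py)
    (hPxy : Px ≠ Py) (hwxy : wx ≠ wy)
    (hsx : arcContains (F s) Px) (hsy : arcContains (F s) Py)
    (hswx : s ≠ wx) (hswy : s ≠ wy)
    (scarx : {u : V | arcContains (F u) Px}.ncard ≤ 2)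
    (scary : {u : V | arcContains (F u) Py}.ncard ≤ 2) : False := by
  have hwxPx : arcContains (F wx) Px := ex ▸ K5 (F wx)
  have hwyPy : arcContains (F wy) Py := ey ▸ K5 (F wy)
  have hmx : ¬ arcContains (F wx) Py := fun hc =>
    not_three scary hc hsy hwyPy (fun h => hswx h.symm) hwxy hswy
  have hmy : ¬ arcContains (F wy) Px := fun hc =>
    not_three scarx hc hsx hwxPx (fun h => hswy h.symm) (fun h => hwxy h.symm) hswx
  set X : Set V := {v : V | v ≠ s ∧ ∀ p, arcContains (F v) p → inCO Px Py p} with hX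
  set Y : Set V := {v : V | v ≠ s ∧ ∀ p, arcContains (F v) p → inCO Py Px p} with hY
  have hwxX : wx ∈ X := ⟨fun h => hswx h.symm,
    fun p hp => zmain (by rw [ex]; exact K0 hPxy) hmx hp⟩
  have hwyY : wy ∈ Y := ⟨fun h => hswy h.symm,
    fun p hp => zmain (by rw [ey]; exact K0 hPxy.symm) hmy hp⟩
  have hcov : ∀ v, v = s ∨ v = s ∨ v ∈ X ∨ v ∈ Y := by
    intro v
    by_cases hvs : v = s
    · exact Or.inl hvs
    refine Or.inr (Or.inr ?_)
    by_cases hvx : arcContains (F v) Px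
    · have hv : v = wx := by
        by_contra hne
        exact not_three scarx hvx hsx hwxPx hvs hne hswx
      exact Or.inl (hv ▸ hwxX)
    by_cases hvy : arcContains (F v) Py
    · have hv : v = wy := by
        by_contra hne
        exact not_three scary hvy hsy hwyPy hvs hne hswy
      exact Or.inr (hv ▸ hwyY)
    rcases K1 hPxy ((F v).1) with hh | hh
    · exact Or.inl ⟨hvs, fun p hp => zmain hh hvy hp⟩
    · exact Or.inr ⟨hvs, fun p hp => zmain hh hvx hp⟩
  have hdisj : ∀ x, x ∈ X → x ∈ Y → False := by
    intro x h1 h2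
    exact K2 (h1.2 _ (K5 (F x))) (h2.2 _ (K5 (F x)))
  have hXY : ∀ x ∈ X, ∀ y ∈ Y, ¬ G.Adj x y := by
    intro x hx y hy hadj
    obtain ⟨-, p, h1, h2⟩ := (hG x y).mp hadj
    exact K2 (hx.2 p h1) (hy.2 p h2)
  exact lcst_no_split hT s s (G.irrefl) X Y
    (fun h => h.1 rfl) (fun h => h.1 rfl) (fun h => h.1 rfl) (fun h => h.1 rfl)
    hXY hdisj hcov ⟨wx, hwxX⟩ ⟨wy, hwyY⟩

lemma gateless_contra
    (hG : ∀ u v : V, G.Adj u v ↔ u ≠ v ∧ ∃ x, arcContains (F u) x ∧ arcContains (F v) x)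
    (hT : IsLCST G T)
    {ux uy : V} {Px Py : Fin m}
    (ex : (F ux).1 = Px) (ey : (F uy).1 = Py)
    (hPxy : Px ≠ Py) (huxy : ux ≠ uy)
    (hgx : ∀ v, arcContains (F v) Px → v = ux)
    (hgy : ∀ v, arcContains (F v) Py → v = uy) : False := by
  obtain ⟨hle, hconn, -, -⟩ := hT
  have hmx : ¬ arcContains (F ux) Py := fun h => huxy (hgy ux h)
  have hmy : ¬ arcContains (F uy) Px := fun h => huxy (hgx uy h).symm
  set X : Set V := {v : V | ∀ p, arcContains (F v) p → inCO Px Py p} with hXdef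
  have hux : ux ∈ X := fun p hp => zmain (by rw [ex]; exact K0 hPxy) hmx hp
  have hyY : ∀ v : V, v ∉ X → ∀ p, arcContains (F v) p → inCO Py Px p := by
    intro v hv
    by_cases hvx : arcContains (F v) Px
    · exact absurd ((hgx v hvx) ▸ hux) hv
    by_cases hvy : arcContains (F v) Py
    · have hv' : v = uy := hgy v hvy
      subst hv'
      exact fun p hp => zmain (by rw [ey]; exact K0 hPxy.symm) hmy hp
    rcases K1 hPxy ((F v).1) with hh | hh
    · exact absurd (fun p hp => zmain hh hvy hp) hv
    · exact fun p hp => zmain hh hvx hp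
  have huyn : uy ∉ X := by
    intro h
    exact K2 (h Py (ey ▸ K5 (F uy))) (K0 hPxy.symm)
  refine no_cross_tree hconn ⟨ux, hux⟩ ⟨uy, huyn⟩ ?_
  intro u v hu hv hadjT
  obtain ⟨-, p, h1, h2⟩ := (hG u v).mp (hle hadjT)
  exact K2 (hu p h1) (hyY v hv p h2)

lemma diag_contra
    (hG : ∀ u v : V, G.Adj u v ↔ u ≠ v ∧ ∃ x, arcContains (F u) x ∧ arcContains (F v) x)
    (hT : IsLCST G T)
    {U1 U2 U3 U4 : V} {P1 P2 P3 P4 : Fin m}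
    (e1 : (F U1).1 = P1) (e2 : (F U2).1 = P2) (e3 : (F U3).1 = P3) (e4 : (F U4).1 = P4)
    (h21 : 0 < (P2 - P1).val) (h32 : (P2 - P1).val < (P3 - P1).val)
    (h43 : (P3 - P1).val < (P4 - P1).val)
    (scar1 : {u : V | arcContains (F u) P1}.ncard ≤ 2)
    (scar3 : {u : V | arcContains (F u) P3}.ncard ≤ 2)
    (hp12 : ∀ v, arcContains (F v) P1 → arcContains (F v) P2 → v = U1 ∨ v = U2)
    (hp13 : ∀ v, arcContains (F v) P1 → arcContains (F v) P3 → v = U1 ∨ v = U3)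
    (hp14 : ∀ v, arcContains (F v) P1 → arcContains (F v) P4 → v = U1 ∨ v = U4)
    (hp23 : ∀ v, arcContains (F v) P2 → arcContains (F v) P3 → v = U2 ∨ v = U3)
    (hp34 : ∀ v, arcContains (F v) P3 → arcContains (F v) P4 → v = U3 ∨ v = U4)
    {g1 g3 : V}
    (hg1ne : g1 ≠ U1) (hg1c : arcContains (F g1) P1)
    (hg3ne : g3 ≠ U3) (hg3c : arcContains (F g3) P3) : False := by
  haveI : NeZero m := ⟨P1.pos.ne'⟩
  -- distances from P1
  have d3pos : 0 < (P3 - P1).val := lt_trans h21 h32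
  have d4pos : 0 < (P4 - P1).val := lt_trans d3pos h43
  have dm2 : (P2 - P1).val < m := (P2 - P1).is_lt
  have dm3 : (P3 - P1).val < m := (P3 - P1).is_lt
  have dm4 : (P4 - P1).val < m := (P4 - P1).is_lt
  -- pairwise difference values
  have e11 : (P1 - P1).val = 0 := K6 P1
  have e32v : (P3 - P2).val = (P3 - P1).val - (P2 - P1).val := by
    rw [valsub_base P3 P2 P1, if_pos (le_of_lt h32)]
  have e12v : (P1 - P2).val = m - (P2 - P1).val := by
    rw [valsub_base P1 P2 P1, if_neg (by omega), e11]; omega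
  have e43v : (P4 - P3).val = (P4 - P1).val - (P3 - P1).val := by
    rw [valsub_base P4 P3 P1, if_pos (le_of_lt h43)]
  have e13v : (P1 - P3).val = m - (P3 - P1).val := by
    rw [valsub_base P1 P3 P1, if_neg (by omega), e11]; omega
  have e14v : (P1 - P4).val = m - (P4 - P1).val := by
    rw [valsub_base P1 P4 P1, if_neg (by omega), e11]; omega
  have e34v : (P3 - P4).val = (P3 - P1).val + m - (P4 - P1).val := by
    rw [valsub_base P3 P4 P1, if_neg (by omega)]
  have e42v : (P4 - P2).val = (P4 - P1).val - (P2 - P1).val := by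
    rw [valsub_base P4 P2 P1, if_pos (by omega)]
  have e24v : (P2 - P4).val = (P2 - P1).val + m - (P4 - P1).val := by
    rw [valsub_base P2 P4 P1, if_neg (by omega)]
  have e31v : (P3 - P1).val = (P3 - P1).val := rfl
  -- point distinctness
  have hP12 : P1 ≠ P2 := fun h => by rw [h, K6] at h21; omega
  have hP13 : P1 ≠ P3 := fun h => by
    have := d3pos; rw [h, K6] at this; omega
  have hP14 : P1 ≠ P4 := fun h => by
    have := d4pos; rw [h, K6] at this; omega
  have hP23 : P2 ≠ P3 := fun h => by rw [h] at h32; omega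
  have hP24 : P2 ≠ P4 := fun h => by
    have : (P2 - P1).val < (P4 - P1).val := by omega
    rw [h] at this; omega
  have hP34 : P3 ≠ P4 := fun h => by rw [h] at h43; omega
  have hP42 : P4 ≠ P2 := fun h => hP24 h.symm
  have hP31 : P3 ≠ P1 := fun h => hP13 h.symm
  -- vertex distinctness
  have hU12 : U1 ≠ U2 := fun h => hP12 (by rw [← e1, ← e2, h])
  have hU13 : U1 ≠ U3 := fun h => hP13 (by rw [← e1, ← e3, h])
  have hU14 : U1 ≠ U4 := fun h => hP14 (by rw [← e1, ← e4, h])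
  have hU23 : U2 ≠ U3 := fun h => hP23 (by rw [← e2, ← e3, h])
  have hU24 : U2 ≠ U4 := fun h => hP24 (by rw [← e2, ← e4, h])
  have hU34 : U3 ≠ U4 := fun h => hP34 (by rw [← e3, ← e4, h])
  -- heads of the lows cover their own points
  have hcov1 : arcContains (F U1) P1 := e1 ▸ K5 (F U1)
  have hcov3 : arcContains (F U3) P3 := e3 ▸ K5 (F U3)
  -- g1 misses P2
  have hg1m2 : ¬ arcContains (F g1) P2 := by
    intro hc
    rcases hp12 g1 hg1c hc with h | h
    · exact hg1ne h
    · have hc1 : arcContains (F U2) P1 := h ▸ hg1c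
      have hc3 : arcContains (F U2) P3 := by
        refine K4 hc1 P3 ?_
        rw [e2, e32v, e12v]; omega
      rcases hp13 U2 hc1 hc3 with h' | h'
      · exact hU12 h'.symm
      · exact hU23 h'
  -- g1 misses P3
  have hg1m3 : ¬ arcContains (F g1) P3 := by
    intro hc
    rcases hp13 g1 hg1c hc with h | h
    · exact hg1ne h
    · have hc1 : arcContains (F U3) P1 := h ▸ hg1c
      have hc4 : arcContains (F U3) P4 := by
        refine K4 hc1 P4 ?_
        rw [e3, e43v, e13v]; omega
      rcases hp14 U3 hc1 hc4 with h' | h'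
      · exact hU13 h'.symm
      · exact hU34 h'
  -- g3 misses P4
  have hg3m4 : ¬ arcContains (F g3) P4 := by
    intro hc
    rcases hp34 g3 hg3c hc with h | h
    · exact hg3ne h
    · have hc3' : arcContains (F U4) P3 := h ▸ hg3c
      have hc1 : arcContains (F U4) P1 := by
        refine K4 hc3' P1 ?_
        rw [e4, e14v, e34v]; omega
      rcases hp13 U4 hc1 hc3' with h' | h'
      · exact hU14 h'.symm
      · exact hU34 h'.symm
  -- g3 misses P1
  have hg3m1 : ¬ arcContains (F g3) P1 := by
    intro hc
    rcases hp13 g3 hc hg3c with h | h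
    · have hc3' : arcContains (F U1) P3 := h ▸ hg3c
      have hc2 : arcContains (F U1) P2 := by
        refine K4 hc3' P2 ?_
        rw [e1]; omega
      rcases hp23 U1 hc2 hc3' with h' | h'
      · exact hU12 h'
      · exact hU13 h'
    · exact hg3ne h
  -- the arc of g1 lies in [P4, P2)
  have Zg1 : ∀ p, arcContains (F g1) p → inCO P4 P2 p := by
    by_cases hc4 : arcContains (F g1) P4
    · rcases hp14 g1 hg1c hc4 with h | h
      · exact absurd h hg1ne
      · have e : (F g1).1 = P4 := by rw [h, e4]
        exact fun p hp => zmain (by rw [e]; exact K0 hP42) hg1m2 hp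
    · rcases K1 hP42 ((F g1).1) with hh | hh
      · exact fun p hp => zmain hh hg1m2 hp
      · exfalso
        have hin : inCO P2 P4 P1 := zmain hh hc4 hg1c
        simp only [inCO] at hin
        rw [e12v, e42v] at hin
        omega
  -- the arc of g3 lies in [P2, P4)
  have Zg3 : ∀ p, arcContains (F g3) p → inCO P2 P4 p := by
    by_cases hc2 : arcContains (F g3) P2
    · rcases hp23 g3 hc2 hg3c with h | h
      · have e : (F g3).1 = P2 := by rw [h, e2]
        exact fun p hp => zmain (by rw [e]; exact K0 hP24) hg3m4 hp
      · exact absurd h hg3ne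
    · rcases K1 hP24 ((F g3).1) with hh | hh
      · exact fun p hp => zmain hh hg3m4 hp
      · exfalso
        have hin : inCO P4 P2 P3 := zmain hh hc2 hg3c
        simp only [inCO] at hin
        rw [e34v, e24v] at hin
        omega
  -- the two gates are distinct and non-adjacent
  have hg13 : g1 ≠ g3 := by
    intro h
    refine K2 (Zg3 _ ?_) (Zg1 _ (K5 (F g1)))
    rw [h]; exact K5 (F g3)
  have hnadj : ¬ G.Adj g1 g3 := by
    intro h
    obtain ⟨-, p, h1, h2⟩ := (hG _ _).mp h
    exact K2 (Zg3 p h2) (Zg1 p h1)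
  -- more distinctness
  have hg3U1 : g3 ≠ U1 := fun h => hg3m1 (by rw [h]; exact hcov1)
  have hg1U3 : g1 ≠ U3 := fun h => hg1m3 (by rw [h]; exact hcov3)
  -- U1 misses P3, U3 misses P1
  have hU1m3 : ¬ arcContains (F U1) P3 := fun hc =>
    not_three scar3 hc hg3c hcov3 (fun h => hg3U1 h.symm) hU13 hg3ne
  have hU3m1 : ¬ arcContains (F U3) P1 := fun hc =>
    not_three scar1 hc hg1c hcov1 (fun h => hg1U3 h.symm) (fun h => hU13 h.symm) hg1ne
  -- the partition
  set X : Set V := {v : V | v ≠ g1 ∧ v ≠ g3 ∧ ∀ p, arcContains (F v) p → inCO P1 P3 p} with hXdef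
  set Y : Set V := {v : V | v ≠ g1 ∧ v ≠ g3 ∧ ∀ p, arcContains (F v) p → inCO P3 P1 p} with hYdef
  have hU1X : U1 ∈ X := ⟨fun h => hg1ne h.symm, fun h => hg3U1 h.symm,
    fun p hp => zmain (by rw [e1]; exact K0 hP13) hU1m3 hp⟩
  have hU3Y : U3 ∈ Y := ⟨fun h => hg1U3 h.symm, fun h => hg3ne h.symm,
    fun p hp => zmain (by rw [e3]; exact K0 hP31) hU3m1 hp⟩
  have hcov : ∀ v, v = g1 ∨ v = g3 ∨ v ∈ X ∨ v ∈ Y := by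
    intro v
    by_cases hv1 : v = g1
    · exact Or.inl hv1
    by_cases hv3 : v = g3
    · exact Or.inr (Or.inl hv3)
    refine Or.inr (Or.inr ?_)
    by_cases hc1 : arcContains (F v) P1
    · have hv : v = U1 := by
        by_contra hne
        exact not_three scar1 hc1 hg1c hcov1 hv1 hne hg1ne
      exact Or.inl (hv ▸ hU1X)
    by_cases hc3 : arcContains (F v) P3
    · have hv : v = U3 := by
        by_contra hne
        exact not_three scar3 hc3 hg3c hcov3 hv3 hne hg3ne
      exact Or.inr (hv ▸ hU3Y)
    rcases K1 hP13 ((F v).1) with hh | hh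
    · exact Or.inl ⟨hv1, hv3, fun p hp => zmain hh hc3 hp⟩
    · exact Or.inr ⟨hv1, hv3, fun p hp => zmain hh hc1 hp⟩
  have hdisj : ∀ x, x ∈ X → x ∈ Y → False := by
    intro x h1 h2
    exact K2 (h1.2.2 _ (K5 (F x))) (h2.2.2 _ (K5 (F x)))
  have hXY : ∀ x ∈ X, ∀ y ∈ Y, ¬ G.Adj x y := by
    intro x hx y hy hadj
    obtain ⟨-, p, h1, h2⟩ := (hG x y).mp hadj
    exact K2 (hx.2.2 p h1) (hy.2.2 p h2)
  exact lcst_no_split hT g1 g3 hnadj X Y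
    (fun h => h.1 rfl) (fun h => h.2.1 rfl) (fun h => h.1 rfl) (fun h => h.2.1 rfl)
    hXY hdisj hcov ⟨U1, hU1X⟩ ⟨U3, hU3Y⟩


lemma rot_order {m : ℕ} [NeZero m] {P1 P2 P3 P4 : Fin m} (h21 : 0 < (P2 - P1).val)
    (h32 : (P2 - P1).val < (P3 - P1).val) (h43 : (P3 - P1).val < (P4 - P1).val) :
    0 < (P3 - P2).val ∧ (P3 - P2).val < (P4 - P2).val ∧ (P4 - P2).val < (P1 - P2).val := by
  have dm4 : (P4 - P1).val < m := (P4 - P1).is_lt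
  have e11 : (P1 - P1).val = 0 := K6 P1
  have e32v : (P3 - P2).val = (P3 - P1).val - (P2 - P1).val := by
    rw [valsub_base P3 P2 P1, if_pos (le_of_lt h32)]
  have e42v : (P4 - P2).val = (P4 - P1).val - (P2 - P1).val := by
    rw [valsub_base P4 P2 P1, if_pos (by omega)]
  have e12v : (P1 - P2).val = m - (P2 - P1).val := by
    rw [valsub_base P1 P2 P1, if_neg (by omega), e11]; omega
  omega

end Main
end CircAux

/-- If a circular-arc graph `G` has an intersection model `F` (all endpoints
distinct, no arc covering the whole circle, adjacency = overlapping arcs) in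
which at least four arcs have density at most 2 (the density of `a(v)` being
the number of arcs containing the head of `a(v)`), then `G` has no locally
connected spanning tree. -/
theorem no_lcst_of_four_low_density_arcs {V : Type*} [Fintype V] {m : ℕ}
    (G : SimpleGraph V) (F : V → Fin m × Fin m)
    (hdist : ∀ u v : V, (F u).1 ≠ (F v).2 ∧
      (u ≠ v → (F u).1 ≠ (F v).1 ∧ (F u).2 ≠ (F v).2))
    (hfull : ∀ v : V, ∃ x : Fin m, ¬ arcContains (F v) x)
    (hG : ∀ u v : V, G.Adj u v ↔
      u ≠ v ∧ ∃ x : Fin m, arcContains (F u) x ∧ arcContains (F v) x)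
    (h4 : 4 ≤ {v : V | {u : V | arcContains (F u) (F v).1}.ncard ≤ 2}.ncard) :
    ¬ ∃ T, IsLCST G T := by
  classical
  rintro ⟨T, hT⟩
  obtain ⟨A, B, C, D, hA, hB, hC, hD, hAB, hAC, hAD, hBC, hBD, hCD⟩ := CircAux.exists4 h4
  haveI : NeZero m := ⟨((F A).1).pos.ne'⟩
  have hhead : ∀ u v : V, u ≠ v → (F u).1 ≠ (F v).1 := fun u v h => ((hdist u v).2 h).1
  have keyinj : ∀ u v : V, u ≠ v →
      ((F u).1 - (F A).1).val ≠ ((F v).1 - (F A).1).val := by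
    intro u v hne he
    have h1 : (F u).1 - (F A).1 = (F v).1 - (F A).1 := Fin.ext he
    have h2 : (F u).1 = (F v).1 := by
      have := congrArg (· + (F A).1) h1
      simpa [sub_add_cancel] using this
    exact hhead u v hne h2
  obtain ⟨w2, w3, w4, k23, k34, m2, m3, m4⟩ :=
    CircAux.sort3 (fun v => ((F v).1 - (F A).1).val) B C D
      (keyinj B C hBC) (keyinj B D hBD) (keyinj C D hCD)
  have hne1 : ∀ x : V, (x = B ∨ x = C ∨ x = D) → x ≠ A := by
    rintro x (rfl | rfl | rfl)
    · exact fun h => hAB h.symm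
    · exact fun h => hAC h.symm
    · exact fun h => hAD h.symm
  have hlowm : ∀ x : V, (x = B ∨ x = C ∨ x = D) →
      {u : V | arcContains (F u) (F x).1}.ncard ≤ 2 := by
    rintro x (rfl | rfl | rfl) <;> assumption
  have hw21 : w2 ≠ A := hne1 w2 m2
  have hw31 : w3 ≠ A := hne1 w3 m3
  have hw41 : w4 ≠ A := hne1 w4 m4
  have k23' : ((F w2).1 - (F A).1).val < ((F w3).1 - (F A).1).val := k23
  have k34' : ((F w3).1 - (F A).1).val < ((F w4).1 - (F A).1).val := k34
  have hw23 : w2 ≠ w3 := by intro h; rw [h] at k23'; exact lt_irrefl _ k23'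
  have hw34 : w3 ≠ w4 := by intro h; rw [h] at k34'; exact lt_irrefl _ k34'
  have hw24 : w2 ≠ w4 := by
    intro h
    have k24' := lt_trans k23' k34'
    rw [h] at k24'
    exact lt_irrefl _ k24' 
  have scar1 : {u : V | arcContains (F u) (F A).1}.ncard ≤ 2 := hA
  have scar2 : {u : V | arcContains (F u) (F w2).1}.ncard ≤ 2 := hlowm w2 m2
  have scar3 : {u : V | arcContains (F u) (F w3).1}.ncard ≤ 2 := hlowm w3 m3
  have scar4 : {u : V | arcContains (F u) (F w4).1}.ncard ≤ 2 := hlowm w4 m4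
  have h21 : 0 < ((F w2).1 - (F A).1).val := CircAux.K7 (hhead w2 A hw21)
  -- pairwise hp hypotheses (case A dispatch)
  by_cases hp12 : ∀ v, arcContains (F v) (F A).1 → arcContains (F v) (F w2).1 →
      v = A ∨ v = w2
  case neg =>
    push_neg at hp12
    obtain ⟨s, hs1, hs2, hne1', hne2'⟩ := hp12
    exact CircAux.caseA_contra hG hT rfl rfl (hhead A w2 (Ne.symm hw21)) (Ne.symm hw21)
      hs1 hs2 hne1' hne2' scar1 scar2
  by_cases hp13 : ∀ v, arcContains (F v) (F A).1 → arcContains (F v) (F w3).1 →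
      v = A ∨ v = w3
  case neg =>
    push_neg at hp13
    obtain ⟨s, hs1, hs2, hne1', hne2'⟩ := hp13
    exact CircAux.caseA_contra hG hT rfl rfl (hhead A w3 (Ne.symm hw31)) (Ne.symm hw31)
      hs1 hs2 hne1' hne2' scar1 scar3
  by_cases hp14 : ∀ v, arcContains (F v) (F A).1 → arcContains (F v) (F w4).1 →
      v = A ∨ v = w4
  case neg =>
    push_neg at hp14
    obtain ⟨s, hs1, hs2, hne1', hne2'⟩ := hp14
    exact CircAux.caseA_contra hG hT rfl rfl (hhead A w4 (Ne.symm hw41)) (Ne.symm hw41)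
      hs1 hs2 hne1' hne2' scar1 scar4
  by_cases hp23 : ∀ v, arcContains (F v) (F w2).1 → arcContains (F v) (F w3).1 →
      v = w2 ∨ v = w3
  case neg =>
    push_neg at hp23
    obtain ⟨s, hs1, hs2, hne1', hne2'⟩ := hp23
    exact CircAux.caseA_contra hG hT rfl rfl (hhead w2 w3 hw23) hw23
      hs1 hs2 hne1' hne2' scar2 scar3
  by_cases hp24 : ∀ v, arcContains (F v) (F w2).1 → arcContains (F v) (F w4).1 →
      v = w2 ∨ v = w4
  case neg =>
    push_neg at hp24
    obtain ⟨s, hs1, hs2, hne1', hne2'⟩ := hp24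
    exact CircAux.caseA_contra hG hT rfl rfl (hhead w2 w4 hw24) hw24
      hs1 hs2 hne1' hne2' scar2 scar4
  by_cases hp34 : ∀ v, arcContains (F v) (F w3).1 → arcContains (F v) (F w4).1 →
      v = w3 ∨ v = w4
  case neg =>
    push_neg at hp34
    obtain ⟨s, hs1, hs2, hne1', hne2'⟩ := hp34
    exact CircAux.caseA_contra hG hT rfl rfl (hhead w3 w4 hw34) hw34
      hs1 hs2 hne1' hne2' scar3 scar4
  -- gates
  have hp14' : ∀ v, arcContains (F v) (F w2).1 → arcContains (F v) (F A).1 →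
      v = w2 ∨ v = A := fun v a b => (hp12 v b a).symm
  have hp34' : ∀ v, arcContains (F v) (F w4).1 → arcContains (F v) (F A).1 →
      v = w4 ∨ v = A := fun v a b => (hp14 v b a).symm
  obtain ⟨r1, r2, r3⟩ := CircAux.rot_order h21 k23' k34'
  have diag24 : (∃ v, v ≠ w2 ∧ arcContains (F v) (F w2).1) →
      (∃ v, v ≠ w4 ∧ arcContains (F v) (F w4).1) → False := by
    rintro ⟨g2, hg2ne, hg2c⟩ ⟨g4, hg4ne, hg4c⟩
    exact CircAux.diag_contra hG hT rfl rfl rfl rfl r1 r2 r3 scar2 scar4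
      hp23 hp24 hp14' hp34 hp34' hg2ne hg2c hg4ne hg4c
  by_cases hg1 : ∃ v, v ≠ A ∧ arcContains (F v) (F A).1
  · by_cases hg3 : ∃ v, v ≠ w3 ∧ arcContains (F v) (F w3).1
    · obtain ⟨g1, hg1ne, hg1c⟩ := hg1
      obtain ⟨g3, hg3ne, hg3c⟩ := hg3
      exact CircAux.diag_contra hG hT rfl rfl rfl rfl h21 k23' k34' scar1 scar3
        hp12 hp13 hp14 hp23 hp34 hg1ne hg1c hg3ne hg3c
    · by_cases hg2 : ∃ v, v ≠ w2 ∧ arcContains (F v) (F w2).1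
      · by_cases hg4 : ∃ v, v ≠ w4 ∧ arcContains (F v) (F w4).1
        · exact diag24 hg2 hg4
        · exact CircAux.gateless_contra hG hT rfl rfl (hhead w3 w4 hw34) hw34
            (fun v hv => Classical.byContradiction fun hne => hg3 ⟨v, hne, hv⟩)
            (fun v hv => Classical.byContradiction fun hne => hg4 ⟨v, hne, hv⟩)
      · exact CircAux.gateless_contra hG hT rfl rfl (hhead w2 w3 hw23) hw23
          (fun v hv => Classical.byContradiction fun hne => hg2 ⟨v, hne, hv⟩)
          (fun v hv => Classical.byContradiction fun hne => hg3 ⟨v, hne, hv⟩)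
  · by_cases hg2 : ∃ v, v ≠ w2 ∧ arcContains (F v) (F w2).1
    · by_cases hg4 : ∃ v, v ≠ w4 ∧ arcContains (F v) (F w4).1
      · exact diag24 hg2 hg4
      · exact CircAux.gateless_contra hG hT rfl rfl (hhead A w4 (Ne.symm hw41)) (Ne.symm hw41)
          (fun v hv => Classical.byContradiction fun hne => hg1 ⟨v, hne, hv⟩)
          (fun v hv => Classical.byContradiction fun hne => hg4 ⟨v, hne, hv⟩)
    · exact CircAux.gateless_contra hG hT rfl rfl (hhead A w2 (Ne.symm hw21)) (Ne.symm hw21)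
        (fun v hv => Classical.byContradiction fun hne => hg1 ⟨v, hne, hv⟩)
        (fun v hv => Classical.byContradiction fun hne => hg2 ⟨v, hne, hv⟩)
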